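/- Let α > 0 and fix real numbers q_1 > q_2 > q_3. For t < q_3 define f(t) = Q_{14}Q_{23} − Q_{24}Q_{13} + Q_{34}Q_{12}, where q_4 = t, q_{ij} = q_i − q_j and Q_{ij} = q_{ij}|q_{ij}|^{−α−2}. Then f is strictly increasing on (−∞, q_3): for all s < t < q_3 one has f(s) < f(t). -/

import Mathlib

/-- With q1 > q2 > q3 fixed, the Pfaffian of the 4×4 matrix as a
function of q4 = t is strictly increasing on (−∞, q3). -/
theorem stmt3 (α : ℝ) (hα : 0 < α) (q1 q2 q3 : ℝ) (h12 : q2 < q1) (h23 : q3 < q2)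
    (f : ℝ → ℝ)
    (hf : ∀ t, f t =
      (q1 - t) * |q1 - t| ^ (-α - 2) * ((q2 - q3) * |q2 - q3| ^ (-α - 2)) -
      (q2 - t) * |q2 - t| ^ (-α - 2) * ((q1 - q3) * |q1 - q3| ^ (-α - 2)) +
      (q3 - t) * |q3 - t| ^ (-α - 2) * ((q1 - q2) * |q1 - q2| ^ (-α - 2))) :
    StrictMonoOn f (Set.Iio q3) := by
  have key : ∀ x : ℝ, 0 < x → x * |x| ^ (-α - 2) = x ^ (-α - 1) := by
    intro x hx
    rw [abs_of_pos hx, mul_comm, ← Real.rpow_add_one hx.ne',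
      show -α - 2 + 1 = -α - 1 by ring]
  set A : ℝ := (q2 - q3) ^ (-α - 1) with hA
  set B : ℝ := (q1 - q3) ^ (-α - 1) with hB
  set C : ℝ := (q1 - q2) ^ (-α - 1) with hC
  set g : ℝ → ℝ := fun t =>
    (q1 - t) ^ (-α - 1) * A - (q2 - t) ^ (-α - 1) * B + (q3 - t) ^ (-α - 1) * C with hg
  have heq : Set.EqOn f g (Set.Iio q3) := by
    intro t ht
    simp only [Set.mem_Iio] at ht
    have h1 : (0:ℝ) < q1 - t := by linarith
    have h2 : (0:ℝ) < q2 - t := by linarith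
    have h3 : (0:ℝ) < q3 - t := by linarith
    rw [hf t, hg]
    simp only
    rw [key _ h1, key _ h2, key _ h3, key _ (by linarith : (0:ℝ) < q2 - q3),
      key _ (by linarith : (0:ℝ) < q1 - q3), key _ (by linarith : (0:ℝ) < q1 - q2)]
  have hgmono : StrictMonoOn g (Set.Iio q3) := by
    have hder : ∀ t ∈ Set.Iio q3, HasDerivAt g
        ((α + 1) * ((q1 - t) ^ (-α - 2) * A - (q2 - t) ^ (-α - 2) * B
          + (q3 - t) ^ (-α - 2) * C)) t := by
      intro t ht
      simp only [Set.mem_Iio] at ht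
      have h1 : (0:ℝ) < q1 - t := by linarith
      have h2 : (0:ℝ) < q2 - t := by linarith
      have h3 : (0:ℝ) < q3 - t := by linarith
      have dpow : ∀ c : ℝ, 0 < c - t → HasDerivAt (fun s => (c - s) ^ (-α - 1))
          ((α + 1) * (c - t) ^ (-α - 2)) t := by
        intro c hc
        have hbase : HasDerivAt (fun s : ℝ => c - s) (-1) t := by
          simpa using (hasDerivAt_id t).const_sub c
        have := (Real.hasDerivAt_rpow_const (x := c - t) (p := -α - 1)
          (Or.inl hc.ne')).comp t hbase
        refine this.congr_deriv ?_
        have : (-α - 1) - 1 = -α - 2 := by ring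
        rw [this]
        ring
      have d1 := ((dpow q1 h1).mul_const A).sub ((dpow q2 h2).mul_const B)
      have d := d1.add ((dpow q3 h3).mul_const C)
      refine d.congr_deriv ?_
      ring
    apply StrictMonoOn.mono (s := Set.Iio q3) ?_ le_rfl
    apply strictMonoOn_of_deriv_pos (convex_Iio q3)
    · exact ContinuousOn.congr (fun t ht => (hder t ht).continuousAt.continuousWithinAt)
        (fun _ _ => rfl) |>.mono le_rfl
    · intro t ht
      rw [interior_Iio] at ht
      rw [(hder t ht).deriv]
      simp only [Set.mem_Iio] at ht
      have h1 : (0:ℝ) < q1 - t := by linarith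
      have h2 : (0:ℝ) < q2 - t := by linarith
      have h3 : (0:ℝ) < q3 - t := by linarith
      have hApos : 0 < A := Real.rpow_pos_of_pos (by linarith) _
      have hCpos : 0 < C := Real.rpow_pos_of_pos (by linarith) _
      have hp1 : (0:ℝ) < (q1 - t) ^ (-α - 2) * A :=
        mul_pos (Real.rpow_pos_of_pos h1 _) hApos
      have hkey : (q2 - t) ^ (-α - 2) * B < (q3 - t) ^ (-α - 2) * C := by
        apply mul_lt_mul'
        · exact le_of_lt (Real.rpow_lt_rpow_of_neg h3 (by linarith) (by linarith))
        · exact Real.rpow_lt_rpow_of_neg (by linarith) (by linarith) (by linarith)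
        · exact le_of_lt (Real.rpow_pos_of_pos (by linarith) _)
        · exact Real.rpow_pos_of_pos h3 _
      have : 0 < (q1 - t) ^ (-α - 2) * A - (q2 - t) ^ (-α - 2) * B
          + (q3 - t) ^ (-α - 2) * C := by linarith
      positivity
  intro a ha b hb hab
  rw [heq ha, heq hb]
  exact hgmono ha hb hab
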